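/- For every positive braid x in B_n^+ with x ≠ 1, setting s_1 = gcd_L(x, Δ_n) and iterating on the quotient yields a unique normal sequence (s_1, ..., s_p) of simple braids with s_p ≠ 1 and s_1 ... s_p = x. -/

import Mathlib

/-- Relations of the braid group presentation. -/
def braidRels (n : ℕ) : Set (FreeGroup (Fin (n - 1))) :=
  {r | (∃ i j : Fin (n - 1), (i : ℕ) + 2 ≤ (j : ℕ) ∧
          r = FreeGroup.of i * FreeGroup.of j * (FreeGroup.of j * FreeGroup.of i)⁻¹) ∨
       (∃ i j : Fin (n - 1), (i : ℕ) + 1 = (j : ℕ) ∧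
          r = FreeGroup.of i * FreeGroup.of j * FreeGroup.of i *
              (FreeGroup.of j * FreeGroup.of i * FreeGroup.of j)⁻¹)}

/-- Artin's braid group `B_n`. -/
def BraidGroup (n : ℕ) : Type := PresentedGroup (braidRels n)

instance (n : ℕ) : Group (BraidGroup n) :=
  inferInstanceAs (Group (PresentedGroup (braidRels n)))

/-- The Artin generator `σ_{i+1}` (0-indexed `i`). -/
def braidGen {n : ℕ} (i : Fin (n - 1)) : BraidGroup n := PresentedGroup.of i

/-- The positive braid monoid `B_n^+` (submonoid generated by the `σ_i`). -/
def PosBraid (n : ℕ) : Submonoid (BraidGroup n) :=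
  Submonoid.closure (Set.range (braidGen (n := n)))

/-- `x` left-divides `y` (with positive quotient). -/
def DividesL {n : ℕ} (x y : BraidGroup n) : Prop := ∃ z ∈ PosBraid n, y = x * z

/-- `x` right-divides `y` (with positive quotient). -/
def DividesR {n : ℕ} (x y : BraidGroup n) : Prop := ∃ z ∈ PosBraid n, y = z * x

/-- Auxiliary: `deltaAux n m` is the Garside element `Δ_m` viewed inside `B_n`. -/
def deltaAux (n : ℕ) : ℕ → BraidGroup n
  | 0 => 1
  | m + 1 =>
      ((List.range m).map (fun i =>
        if h : i < n - 1 then braidGen ⟨i, h⟩ else 1)).prod * deltaAux n m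

/-- Garside's element `Δ_n = σ_1⋯σ_{n-1} Δ_{n-1}`. -/
def braidDelta (n : ℕ) : BraidGroup n := deltaAux n n

/-- A simple braid: a (positive) divisor of `Δ_n`. -/
def Simple {n : ℕ} (s : BraidGroup n) : Prop :=
  s ∈ PosBraid n ∧ DividesL s (braidDelta n)

/-- Normality of a pair, in the divisor form: every `σ_i` left-dividing `t`
right-divides `s`. -/
def NormalPair {n : ℕ} (s t : BraidGroup n) : Prop :=
  ∀ i : Fin (n - 1), DividesL (braidGen i) t → DividesR (braidGen i) s

/-- `g` is the left gcd of `x` and `y` in `B_n^+`. -/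
def IsLeftGcd {n : ℕ} (g x y : BraidGroup n) : Prop :=
  g ∈ PosBraid n ∧ DividesL g x ∧ DividesL g y ∧
    ∀ d ∈ PosBraid n, DividesL d x → DividesL d y → DividesL d g

/-- Normality of a pair, in the gcd form: `s = gcd_L(st, Δ_n)`. -/
def GNormal {n : ℕ} (s t : BraidGroup n) : Prop :=
  IsLeftGcd s (s * t) (braidDelta n)

/-- `u` is the left lcm of `x` and `y`. -/
def IsLeftLcm {n : ℕ} (u x y : BraidGroup n) : Prop :=
  DividesR x u ∧ DividesR y u ∧ ∀ v, DividesR x v → DividesR y v → DividesR u v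

/-- The position `i` inside `Fin n`. -/
def finL {n : ℕ} (i : Fin (n - 1)) : Fin n := ⟨i, by have := i.isLt; omega⟩

/-- The position `i + 1` inside `Fin n`. -/
def finR {n : ℕ} (i : Fin (n - 1)) : Fin n := ⟨(i : ℕ) + 1, by have := i.isLt; omega⟩

/-- `i` is a descent of the permutation `f` : `f(i) > f(i+1)`. -/
def Descent {n : ℕ} (f : Equiv.Perm (Fin n)) (i : Fin (n - 1)) : Prop :=
  f (finR i) < f (finL i)

/-- `i` is a recoil of the permutation `f` : `f⁻¹(i) > f⁻¹(i+1)`. -/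
def Recoil {n : ℕ} (f : Equiv.Perm (Fin n)) (i : Fin (n - 1)) : Prop :=
  f⁻¹ (finR i) < f⁻¹ (finL i)

/-- Braid words: letters are a generator index together with a sign
(`true` = positive letter `σ_i`, `false` = negative letter `σ_i⁻¹`). -/
abbrev BWord (n : ℕ) := List (Fin (n - 1) × Bool)

/-- The braid represented by a braid word. -/
def evalWord {n : ℕ} (w : BWord n) : BraidGroup n :=
  (w.map (fun x => if x.2 then braidGen x.1 else (braidGen x.1)⁻¹)).prod

namespace Braid

variable {n : ℕ}

abbrev Idx (n : ℕ) := Fin (n-1)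
abbrev Wd (n : ℕ) := List (Idx n)

/-- basic braid relations on words -/
inductive Brel (n : ℕ) : Wd n → Wd n → Prop
  | comm (i j : Idx n) (h : (i:ℕ)+2 ≤ (j:ℕ)) : Brel n [i,j] [j,i]
  | braid (i j : Idx n) (h : (i:ℕ)+1 = (j:ℕ)) : Brel n [i,j,i] [j,i,j]

/-- one rewriting step (in either direction) -/
def Step (u v : Wd n) : Prop :=
  ∃ a b p q, (Brel n p q ∨ Brel n q p) ∧ u = a++(p++b) ∧ v = a++(q++b)

def Steps : ℕ → Wd n → Wd n → Prop
  | 0, u, v => u = v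
  | (k+1), u, v => ∃ z, Step u z ∧ Steps k z v

def Eqv (u v : Wd n) : Prop := ∃ k, Steps k u v

theorem Eqv.refl (u : Wd n) : Eqv u u := ⟨0, rfl⟩

theorem Eqv.of_eq {u v : Wd n} (h : u = v) : Eqv u v := ⟨0, h⟩

theorem Step.symm {u v : Wd n} (h : Step u v) : Step v u := by
  obtain ⟨a,b,p,q,hr,hu,hv⟩ := h
  exact ⟨a,b,q,p,hr.symm,hv,hu⟩

theorem Steps.tail {k : ℕ} {u v w : Wd n} (h : Steps k u v) (h2 : Step v w) :
    Steps (k+1) u w := by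
  induction k generalizing u with
  | zero => exact ⟨w, h ▸ h2, rfl⟩
  | succ k ih =>
      obtain ⟨z, hz, hs⟩ := h
      exact ⟨z, hz, ih hs⟩

theorem Steps.symm {k : ℕ} {u v : Wd n} (h : Steps k u v) : Steps k v u := by
  induction k generalizing u with
  | zero => exact Eq.symm (α := Wd n) h
  | succ k ih =>
      obtain ⟨z, hz, hs⟩ := h
      exact (ih hs).tail hz.symm

theorem Steps.trans {k l : ℕ} {u v w : Wd n} (h : Steps k u v) (h2 : Steps l v w) :
    Steps (k+l) u w := by
  induction k generalizing u with
  | zero => rw [Nat.zero_add]; exact (Eq.symm (α := Wd n) h) ▸ h2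
  | succ k ih =>
      obtain ⟨z, hz, hs⟩ := h
      rw [Nat.succ_add]
      exact ⟨z, hz, ih hs⟩

theorem Eqv.symm {u v : Wd n} (h : Eqv u v) : Eqv v u := by
  obtain ⟨k, hk⟩ := h; exact ⟨k, hk.symm⟩

theorem Eqv.trans {u v w : Wd n} (h : Eqv u v) (h2 : Eqv v w) : Eqv u w := by
  obtain ⟨k, hk⟩ := h; obtain ⟨l, hl⟩ := h2; exact ⟨k+l, hk.trans hl⟩

theorem Step.append_left {u v : Wd n} (a : Wd n) (h : Step u v) :
    Step (a++u) (a++v) := by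
  obtain ⟨c,b,p,q,hr,hu,hv⟩ := h
  exact ⟨a++c,b,p,q,hr, by simp [hu], by simp [hv]⟩

theorem Step.append_right {u v : Wd n} (b : Wd n) (h : Step u v) :
    Step (u++b) (v++b) := by
  obtain ⟨a,c,p,q,hr,hu,hv⟩ := h
  exact ⟨a,c++b,p,q,hr, by simp [hu], by simp [hv]⟩

theorem Eqv.append_left {u v : Wd n} (a : Wd n) (h : Eqv u v) : Eqv (a++u) (a++v) := by
  obtain ⟨k, hk⟩ := h
  refine ⟨k, ?_⟩
  induction k generalizing u with
  | zero => simp [Steps] at hk ⊢; rw [hk]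
  | succ k ih =>
      obtain ⟨z, hz, hs⟩ := hk
      exact ⟨a++z, hz.append_left a, ih hs⟩

theorem Eqv.append_right {u v : Wd n} (b : Wd n) (h : Eqv u v) : Eqv (u++b) (v++b) := by
  obtain ⟨k, hk⟩ := h
  refine ⟨k, ?_⟩
  induction k generalizing u with
  | zero => simp [Steps] at hk ⊢; rw [hk]
  | succ k ih =>
      obtain ⟨z, hz, hs⟩ := hk
      exact ⟨z++b, hz.append_right b, ih hs⟩

theorem Eqv.append {u v u' v' : Wd n} (h : Eqv u u') (h2 : Eqv v v') :
    Eqv (u++v) (u'++v') :=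
  (h.append_right v).trans (h2.append_left u')

theorem Eqv.cons {u v : Wd n} (i : Idx n) (h : Eqv u v) : Eqv (i::u) (i::v) :=
  h.append_left [i]

/-- `i` and `j` are distant letters -/
def far (i j : Idx n) : Prop := (i:ℕ)+2 ≤ (j:ℕ) ∨ (j:ℕ)+2 ≤ (i:ℕ)

/-- `i` and `j` are adjacent letters -/
def adj (i j : Idx n) : Prop := (i:ℕ)+1 = (j:ℕ) ∨ (j:ℕ)+1 = (i:ℕ)

instance (i j : Idx n) : Decidable (adj i j) := by unfold adj; infer_instance

theorem far.symm {i j : Idx n} (h : far i j) : far j i := Or.symm h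
theorem adj.symm {i j : Idx n} (h : adj i j) : adj j i := Or.symm h

theorem far_or_adj {i j : Idx n} (h : i ≠ j) : far i j ∨ adj i j := by
  have : (i:ℕ) ≠ (j:ℕ) := fun hc => h (Fin.ext hc)
  unfold far adj; omega

theorem not_adj_self (i : Idx n) : ¬ adj i i := by unfold adj; omega

theorem far.ne {i j : Idx n} (h : far i j) : i ≠ j := by
  rintro rfl; unfold far at h; omega

theorem adj.ne {i j : Idx n} (h : adj i j) : i ≠ j := by
  rintro rfl; unfold adj at h; omega

theorem adj.not_far {i j : Idx n} (h : adj i j) : ¬ far i j := by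
  unfold adj at h; unfold far; omega

theorem eqv_comm {i j : Idx n} (h : far i j) (w : Wd n) :
    Eqv (i::j::w) (j::i::w) := by
  refine ⟨1, ⟨j::i::w, ⟨[], w, [i,j], [j,i], ?_, rfl, rfl⟩, rfl⟩⟩
  rcases h with h | h
  · exact Or.inl (Brel.comm i j h)
  · exact Or.inr (Brel.comm j i h)

theorem eqv_braid {i j : Idx n} (h : adj i j) (w : Wd n) :
    Eqv (i::j::i::w) (j::i::j::w) := by
  refine ⟨1, ⟨j::i::j::w, ⟨[], w, [i,j,i], [j,i,j], ?_, rfl, rfl⟩, rfl⟩⟩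
  rcases h with h | h
  · exact Or.inl (Brel.braid i j h)
  · exact Or.inr (Brel.braid j i h)

theorem Brel.length {p q : Wd n} (h : Brel n p q) : p.length = q.length := by
  cases h <;> rfl

theorem Step.length {u v : Wd n} (h : Step u v) : u.length = v.length := by
  obtain ⟨a,b,p,q,hr,hu,hv⟩ := h
  have : p.length = q.length := by rcases hr with h|h; exacts [h.length, h.length.symm]
  simp [hu, hv, this]

theorem Eqv.length {u v : Wd n} (h : Eqv u v) : u.length = v.length := by
  obtain ⟨k, hk⟩ := h
  induction k generalizing u with
  | zero => rw [show u = v from hk]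
  | succ k ih =>
      obtain ⟨z, hz, hs⟩ := hk
      rw [hz.length]; exact ih hs

theorem Step.reverse {u v : Wd n} (h : Step u v) : Step u.reverse v.reverse := by
  obtain ⟨a,b,p,q,hr,hu,hv⟩ := h
  refine ⟨b.reverse, a.reverse, p.reverse, q.reverse, ?_, by simp [hu], by simp [hv]⟩
  have key : ∀ {p q : Wd n}, Brel n p q → (Brel n p.reverse q.reverse ∨ Brel n q.reverse p.reverse) := by
    rintro p q (⟨i,j,h⟩|⟨i,j,h⟩)
    · exact Or.inr (Brel.comm i j h)
    · exact Or.inl (Brel.braid i j h)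
  rcases hr with h|h
  · exact key h
  · exact (key h).symm

theorem Eqv.reverse {u v : Wd n} (h : Eqv u v) : Eqv u.reverse v.reverse := by
  obtain ⟨k, hk⟩ := h
  refine ⟨k, ?_⟩
  induction k generalizing u with
  | zero => simp [Steps] at hk ⊢; rw [hk]
  | succ k ih =>
      obtain ⟨z, hz, hs⟩ := hk
      exact ⟨z.reverse, hz.reverse, ih hs⟩

end Braid
namespace Braid

variable {n : ℕ}

/-- the complement: `[i] ++ comp i j` is the right lcm word of `σ_i, σ_j`. -/
def comp (i j : Idx n) : Wd n := if i = j then [] else if adj i j then [j,i] else [j]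

theorem comp_self (i : Idx n) : comp i i = [] := by simp [comp]

theorem comp_adj {i j : Idx n} (h : adj i j) : comp i j = [j,i] := by
  simp [comp, h.ne, h]

theorem comp_far {i j : Idx n} (h : far i j) : comp i j = [j] := by
  have := h.ne
  have : ¬ adj i j := fun ha => ha.not_far h
  simp [comp, ‹far i j›.ne, this]

theorem Step.eqv {u v : Wd n} (h : Step u v) : Eqv u v := ⟨1, v, h, rfl⟩

/-- decomposition of a rewriting step on a word with an exposed head letter -/
theorem step_cons {i : Idx n} {u z : Wd n} (h : Step (i::u) z) :
    (∃ u', Step u u' ∧ z = i::u') ∨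
    (∃ c b, far i c ∧ u = c::b ∧ z = c::i::b) ∨
    (∃ c b, adj i c ∧ u = c::i::b ∧ z = c::i::c::b) := by
  obtain ⟨a,b,p,q,hr,hu,hv⟩ := h
  match a, hu with
  | (x::a'), hu =>
      rw [List.cons_append] at hu hv
      injection hu with h1 h2
      subst h1
      exact Or.inl ⟨a'++(q++b), ⟨a',b,p,q,hr,h2,rfl⟩, hv⟩
  | [], hu =>
      rw [List.nil_append] at hu hv
      rcases hr with hr | hr
      · cases hr with
        | comm i₀ j₀ h₀ =>
            simp only [List.cons_append, List.nil_append] at hu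
            obtain ⟨rfl, rfl⟩ := List.cons.injEq .. ▸ hu
            exact Or.inr (Or.inl ⟨j₀, b, Or.inl h₀, rfl, by simpa using hv⟩)
        | braid i₀ j₀ h₀ =>
            simp only [List.cons_append, List.nil_append] at hu
            obtain ⟨rfl, rfl⟩ := List.cons.injEq .. ▸ hu
            exact Or.inr (Or.inr ⟨j₀, b, Or.inl h₀, rfl, by simpa using hv⟩)
      · cases hr with
        | comm i₀ j₀ h₀ =>
            simp only [List.cons_append, List.nil_append] at hu
            obtain ⟨rfl, rfl⟩ := List.cons.injEq .. ▸ hu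
            exact Or.inr (Or.inl ⟨i₀, b, Or.inr h₀, rfl, by simpa using hv⟩)
        | braid i₀ j₀ h₀ =>
            simp only [List.cons_append, List.nil_append] at hu
            obtain ⟨rfl, rfl⟩ := List.cons.injEq .. ▸ hu
            exact Or.inr (Or.inr ⟨i₀, b, Or.inr h₀, rfl, by simpa using hv⟩)

end Braid
namespace Braid

variable {n : ℕ}

theorem adj_adj_adj_false {i c j : Idx n} (h1 : adj i j) (h2 : adj c j) (h3 : adj i c) : False := by
  unfold adj at *; omega

/-- Garside's key lemma, word version. -/
theorem garside_main : ∀ (ℓ : ℕ) (u v : Wd n) (i j : Idx n), u.length < ℓ →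
    Eqv (i::u) (j::v) → ∃ w, Eqv u (comp i j ++ w) ∧ Eqv v (comp j i ++ w) := by
  intro ℓ
  induction ℓ with
  | zero => intro u v i j h; exact absurd h (Nat.not_lt_zero _)
  | succ ℓ IHl =>
    suffices H : ∀ (k : ℕ) (u v : Wd n) (i j : Idx n), u.length < ℓ+1 → Steps k (i::u) (j::v) →
        ∃ w, Eqv u (comp i j ++ w) ∧ Eqv v (comp j i ++ w) by
      rintro u v i j hl ⟨k, hk⟩; exact H k u v i j hl hk
    intro k
    induction k with
    | zero =>
        intro u v i j _ h
        have h' : (i::u) = (j::v) := h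
        injection h' with h1 h2
        subst h1; subst h2
        exact ⟨u, by simp [comp_self]; exact Eqv.refl u, by simp [comp_self]; exact Eqv.refl u⟩
    | succ k IHk =>
        intro u v i j hl h
        obtain ⟨z, hz, hs⟩ := h
        rcases step_cons hz with ⟨u', hu', rfl⟩ | ⟨c, b, hic, rfl, rfl⟩ | ⟨c, b, hic, rfl, rfl⟩
        · -- step inside the tail
          obtain ⟨w, h1, h2⟩ := IHk u' v i j (by rw [← hu'.length]; exact hl) hs
          exact ⟨w, hu'.eqv.trans h1, h2⟩
        · -- commutation step at the head : far i c, u = c::b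
          have hbl : b.length < ℓ := by simp at hl; omega
          obtain ⟨w₁, H1, H2⟩ := IHk (i::b) v c j (by simpa using hl) hs
          by_cases hcj : c = j
          · subst hcj
            rw [comp_self] at H1 H2
            simp only [List.nil_append] at H1 H2
            have hfij : far i c := hic
            rw [comp_far hfij, comp_far hfij.symm]
            exact ⟨b, Eqv.refl _, H2.trans H1.symm⟩
          · rcases far_or_adj hcj with hfcj | hacj
            · -- far c j
              rw [comp_far hfcj] at H1
              rw [comp_far hfcj.symm] at H2
              simp only [List.cons_append, List.nil_append] at H1 H2
              obtain ⟨w₂, G1, G2⟩ := IHl b w₁ i j hbl H1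
              by_cases hij : i = j
              · subst hij
                rw [comp_self] at G1 G2 ⊢
                simp only [List.nil_append] at G1 G2 ⊢
                exact ⟨c::b, Eqv.refl _, H2.trans ((G2.trans G1.symm).cons c)⟩
              · rcases far_or_adj hij with hfij | haij
                · rw [comp_far hfij] at G1 ⊢
                  rw [comp_far hfij.symm] at G2 ⊢
                  simp only [List.cons_append, List.nil_append] at G1 G2 ⊢
                  refine ⟨c::w₂, ?_, ?_⟩
                  · exact (G1.cons c).trans (eqv_comm hfcj w₂)
                  · exact (H2.trans (G2.cons c)).trans (eqv_comm hic.symm w₂)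
                · rw [comp_adj haij] at G1 ⊢
                  rw [comp_adj haij.symm] at G2 ⊢
                  simp only [List.cons_append, List.nil_append] at G1 G2 ⊢
                  refine ⟨c::w₂, ?_, ?_⟩
                  · exact ((G1.cons c).trans (eqv_comm hfcj (i::w₂))).trans
                      ((eqv_comm hic.symm w₂).cons j)
                  · exact ((H2.trans (G2.cons c)).trans (eqv_comm hic.symm (j::w₂))).trans
                      ((eqv_comm hfcj w₂).cons i)
            · -- adj c j
              rw [comp_adj hacj] at H1
              rw [comp_adj hacj.symm] at H2
              simp only [List.cons_append, List.nil_append] at H1 H2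
              obtain ⟨w₂, G1, G2⟩ := IHl b (c::w₁) i j hbl H1
              by_cases hij : i = j
              · subst hij
                exact absurd hic.symm hacj.not_far
              · have hw₁l : w₁.length < ℓ := by
                  have := H1.length; simp at this; omega
                rcases far_or_adj hij with hfij | haij
                · -- far i j, adj c j, far i c
                  rw [comp_far hfij] at G1 ⊢
                  rw [comp_far hfij.symm] at G2 ⊢
                  simp only [List.cons_append, List.nil_append] at G1 G2 ⊢
                  obtain ⟨w₃, K1, K2⟩ := IHl w₁ w₂ c i hw₁l G2
                  rw [comp_far hic.symm] at K1
                  rw [comp_far hic] at K2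
                  simp only [List.cons_append, List.nil_append] at K1 K2
                  refine ⟨c::j::w₃, ?_, ?_⟩
                  · exact ((G1.cons c).trans ((K2.cons j).cons c)).trans (eqv_braid hacj w₃)
                  · exact (((H2.trans ((K1.cons j).cons c)).trans
                      ((eqv_comm hfij.symm w₃).cons c))).trans (eqv_comm hic.symm (j::w₃))
                · -- adj i j, adj c j, far i c
                  rw [comp_adj haij] at G1 ⊢
                  rw [comp_adj haij.symm] at G2 ⊢
                  simp only [List.cons_append, List.nil_append] at G1 G2 ⊢
                  obtain ⟨w₃, K1, K2⟩ := IHl w₁ (j::w₂) c i hw₁l G2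
                  rw [comp_far hic.symm] at K1
                  rw [comp_far hic] at K2
                  simp only [List.cons_append, List.nil_append] at K1 K2
                  have hw₂l : w₂.length < ℓ := by
                    have := G2.length; simp at this; omega
                  obtain ⟨w₄, L1, L2⟩ := IHl w₂ w₃ j c hw₂l K2
                  rw [comp_adj hacj.symm] at L1
                  rw [comp_adj hacj] at L2
                  simp only [List.cons_append, List.nil_append] at L1 L2
                  refine ⟨c::j::i::w₄, ?_, ?_⟩
                  · -- c::b ≡ j::i::c::j::i::w₄
                    have e1 : Eqv (c::b) (c::j::i::c::j::w₄) :=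
                      (G1.cons c).trans (((L1.cons i).cons j).cons c)
                    have e2 : Eqv (c::j::i::c::j::w₄) (c::j::c::i::j::w₄) :=
                      ((eqv_comm hic (j::w₄)).cons j).cons c
                    have e3 : Eqv (c::j::c::i::j::w₄) (j::c::j::i::j::w₄) :=
                      eqv_braid hacj (i::j::w₄)
                    have e4 : Eqv (j::c::j::i::j::w₄) (j::c::i::j::i::w₄) :=
                      ((eqv_braid haij.symm w₄).cons c).cons j
                    have e5 : Eqv (j::c::i::j::i::w₄) (j::i::c::j::i::w₄) :=
                      (eqv_comm hic.symm (j::i::w₄)).cons j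
                    exact (((e1.trans e2).trans e3).trans e4).trans e5
                  · -- v ≡ i::j::c::j::i::w₄
                    have e1 : Eqv v (c::j::i::j::c::w₄) :=
                      (H2.trans ((K1.cons j).cons c)).trans (((L2.cons i).cons j).cons c)
                    have e2 : Eqv (c::j::i::j::c::w₄) (c::i::j::i::c::w₄) :=
                      (eqv_braid haij.symm (c::w₄)).cons c
                    have e3 : Eqv (c::i::j::i::c::w₄) (i::c::j::i::c::w₄) :=
                      eqv_comm hic.symm (j::i::c::w₄)
                    have e4 : Eqv (i::c::j::i::c::w₄) (i::c::j::c::i::w₄) :=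
                      ((eqv_comm hic w₄).cons j).cons c |>.cons i
                    have e5 : Eqv (i::c::j::c::i::w₄) (i::j::c::j::i::w₄) :=
                      (eqv_braid hacj (i::w₄)).cons i
                    exact (((e1.trans e2).trans e3).trans e4).trans e5
        · -- braid step at the head : adj i c, u = c::i::b
          have hbl : b.length < ℓ := by simp at hl; omega
          have hcbl : (c::b).length < ℓ := by simp at hl ⊢; omega
          obtain ⟨w₁, H1, H2⟩ := IHk (i::c::b) v c j (by simpa using hl) hs
          by_cases hcj : c = j
          · subst hcj
            rw [comp_self] at H1 H2
            simp only [List.nil_append] at H1 H2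
            rw [comp_adj hic, comp_adj hic.symm]
            exact ⟨b, Eqv.refl _, H2.trans H1.symm⟩
          · rcases far_or_adj hcj with hfcj | hacj
            · -- far c j
              rw [comp_far hfcj] at H1
              rw [comp_far hfcj.symm] at H2
              simp only [List.cons_append, List.nil_append] at H1 H2
              obtain ⟨w₂, G1, G2⟩ := IHl (c::b) w₁ i j hcbl H1
              by_cases hij : i = j
              · subst hij
                exact absurd hfcj.symm hic.not_far
              · rcases far_or_adj hij with hfij | haij
                · -- far i j, far c j, adj i c
                  rw [comp_far hfij] at G1 ⊢
                  rw [comp_far hfij.symm] at G2 ⊢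
                  simp only [List.cons_append, List.nil_append] at G1 G2 ⊢
                  obtain ⟨w₃, M1, M2⟩ := IHl b w₂ c j hbl G1
                  rw [comp_far hfcj] at M1
                  rw [comp_far hfcj.symm] at M2
                  simp only [List.cons_append, List.nil_append] at M1 M2
                  refine ⟨c::i::w₃, ?_, ?_⟩
                  · exact (((M1.cons i).cons c).trans
                      ((eqv_comm hfij w₃).cons c)).trans (eqv_comm hfcj (i::w₃))
                  · exact ((H2.trans (G2.cons c)).trans ((M2.cons i).cons c)).trans
                      (eqv_braid hic.symm w₃)
                · -- adj i j, far c j, adj i c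
                  rw [comp_adj haij] at G1 ⊢
                  rw [comp_adj haij.symm] at G2 ⊢
                  simp only [List.cons_append, List.nil_append] at G1 G2 ⊢
                  obtain ⟨w₃, M1, M2⟩ := IHl b (i::w₂) c j hbl G1
                  rw [comp_far hfcj] at M1
                  rw [comp_far hfcj.symm] at M2
                  simp only [List.cons_append, List.nil_append] at M1 M2
                  have hw₂l : w₂.length < ℓ := by
                    have := G1.length; simp at this; omega
                  obtain ⟨w₄, N1, N2⟩ := IHl w₂ w₃ i c hw₂l M2
                  rw [comp_adj hic] at N1
                  rw [comp_adj hic.symm] at N2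
                  simp only [List.cons_append, List.nil_append] at N1 N2
                  refine ⟨c::i::j::w₄, ?_, ?_⟩
                  · -- c::i::b ≡ j::i::c::i::j::w₄
                    have e1 : Eqv (c::i::b) (c::i::j::i::c::w₄) :=
                      ((M1.cons i).cons c).trans (((N2.cons j).cons i).cons c)
                    have e2 : Eqv (c::i::j::i::c::w₄) (c::j::i::j::c::w₄) :=
                      (eqv_braid haij (c::w₄)).cons c
                    have e3 : Eqv (c::j::i::j::c::w₄) (j::c::i::j::c::w₄) :=
                      eqv_comm hfcj (i::j::c::w₄)
                    have e4 : Eqv (j::c::i::j::c::w₄) (j::c::i::c::j::w₄) :=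
                      ((eqv_comm hfcj.symm w₄).cons i).cons c |>.cons j
                    have e5 : Eqv (j::c::i::c::j::w₄) (j::i::c::i::j::w₄) :=
                      ((eqv_braid hic.symm (j::w₄)).cons j)
                    exact (((e1.trans e2).trans e3).trans e4).trans e5
                  · -- v ≡ i::j::c::i::j::w₄
                    have e1 : Eqv v (c::i::j::c::i::w₄) :=
                      (H2.trans (G2.cons c)).trans (((N1.cons j).cons i).cons c)
                    have e2 : Eqv (c::i::j::c::i::w₄) (c::i::c::j::i::w₄) :=
                      ((eqv_comm hfcj.symm (i::w₄)).cons i).cons c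
                    have e3 : Eqv (c::i::c::j::i::w₄) (i::c::i::j::i::w₄) :=
                      eqv_braid hic.symm (j::i::w₄)
                    have e4 : Eqv (i::c::i::j::i::w₄) (i::c::j::i::j::w₄) :=
                      ((eqv_braid haij w₄).cons c).cons i
                    have e5 : Eqv (i::c::j::i::j::w₄) (i::j::c::i::j::w₄) :=
                      (eqv_comm hfcj (i::j::w₄)).cons i
                    exact (((e1.trans e2).trans e3).trans e4).trans e5
            · -- adj c j, adj i c
              rw [comp_adj hacj] at H1
              rw [comp_adj hacj.symm] at H2
              simp only [List.cons_append, List.nil_append] at H1 H2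
              obtain ⟨w₂, G1, G2⟩ := IHl (c::b) (c::w₁) i j hcbl H1
              by_cases hij : i = j
              · subst hij
                rw [comp_self] at G1 G2 ⊢
                simp only [List.nil_append] at G1 G2 ⊢
                obtain ⟨w₃, M1, M2⟩ := IHl b w₁ c c hbl (G1.trans G2.symm)
                rw [comp_self] at M1 M2
                simp only [List.nil_append] at M1 M2
                refine ⟨c::i::w₃, ?_, ?_⟩
                · exact (M1.cons i).cons c
                · exact H2.trans ((M2.cons i).cons c)
              · rcases far_or_adj hij with hfij | haij
                · -- far i j, adj c j, adj i c
                  rw [comp_far hfij] at G1 ⊢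
                  rw [comp_far hfij.symm] at G2 ⊢
                  simp only [List.cons_append, List.nil_append] at G1 G2 ⊢
                  obtain ⟨w₃, M1, M2⟩ := IHl b w₂ c j hbl G1
                  rw [comp_adj hacj] at M1
                  rw [comp_adj hacj.symm] at M2
                  simp only [List.cons_append, List.nil_append] at M1 M2
                  have hw₁l : w₁.length < ℓ := by
                    have := H1.length; simp at this; omega
                  obtain ⟨w₄, N1, N2⟩ := IHl w₁ w₂ c i hw₁l G2
                  rw [comp_adj hic.symm] at N1
                  rw [comp_adj hic] at N2
                  simp only [List.cons_append, List.nil_append] at N1 N2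
                  have hjw₃l : (j::w₃).length < ℓ := by
                    have h1 := G1.length; have h2 := M2.length; simp at h1 h2 ⊢; omega
                  have hw₃l : w₃.length < ℓ := by simp at hjw₃l; omega
                  obtain ⟨w₅, P1, P2⟩ := IHl (j::w₃) (i::w₄) c c hjw₃l (M2.symm.trans N2)
                  rw [comp_self] at P1 P2
                  simp only [List.nil_append] at P1 P2
                  obtain ⟨w₆, Q1, Q2⟩ := IHl w₃ w₄ j i hw₃l (P1.trans P2.symm)
                  rw [comp_far hfij.symm] at Q1
                  rw [comp_far hfij] at Q2
                  simp only [List.cons_append, List.nil_append] at Q1 Q2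
                  refine ⟨c::i::j::c::w₆, ?_, ?_⟩
                  · have e1 : Eqv (c::i::b) (c::i::j::c::i::w₆) :=
                      ((M1.cons i).cons c).trans ((((Q1.cons c).cons j).cons i).cons c)
                    have e2 : Eqv (c::i::j::c::i::w₆) (c::j::i::c::i::w₆) :=
                      (eqv_comm hfij (c::i::w₆)).cons c
                    have e3 : Eqv (c::j::i::c::i::w₆) (c::j::c::i::c::w₆) :=
                      ((eqv_braid hic w₆).cons j).cons c
                    have e4 : Eqv (c::j::c::i::c::w₆) (j::c::j::i::c::w₆) :=
                      eqv_braid hacj (i::c::w₆)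
                    have e5 : Eqv (j::c::j::i::c::w₆) (j::c::i::j::c::w₆) :=
                      ((eqv_comm hfij.symm (c::w₆)).cons c).cons j
                    exact (((e1.trans e2).trans e3).trans e4).trans e5
                  · have f2 : Eqv v (c::j::i::c::j::w₆) :=
                      (H2.trans ((N1.cons j).cons c)).trans ((((Q2.cons c).cons i).cons j).cons c)
                    have f4 : Eqv (c::j::i::c::j::w₆) (c::i::j::c::j::w₆) :=
                      (eqv_comm hfij.symm (c::j::w₆)).cons c
                    have f5 : Eqv (c::i::j::c::j::w₆) (c::i::c::j::c::w₆) :=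
                      ((eqv_braid hacj.symm w₆).cons i).cons c
                    have f6 : Eqv (c::i::c::j::c::w₆) (i::c::i::j::c::w₆) :=
                      eqv_braid hic.symm (j::c::w₆)
                    exact ((f2.trans f4).trans f5).trans f6
                · exact (adj_adj_adj_false haij hacj hic).elim

end Braid
namespace Braid

variable {n : ℕ}

/-- the word `σ_0 σ_1 ⋯ σ_{k-1}` (letters clamped away above `n-2`) -/
def Cw (n : ℕ) : ℕ → Wd n
  | 0 => []
  | (k+1) => Cw n k ++ (if h : k < n-1 then [⟨k, h⟩] else [])

/-- the Garside word `Δ_m` -/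
def Dw (n : ℕ) : ℕ → Wd n
  | 0 => []
  | (m+1) => Cw n m ++ Dw n m

theorem mem_Cw {k : ℕ} {s : Idx n} (h : s ∈ Cw n k) : (s:ℕ) < k := by
  induction k with
  | zero => simp [Cw] at h
  | succ k ih =>
      simp only [Cw, List.mem_append] at h
      rcases h with h | h
      · exact Nat.lt_succ_of_lt (ih h)
      · split at h
        · simp at h; subst h; exact Nat.lt_succ_self k
        · simp at h

theorem mem_Dw {m : ℕ} {s : Idx n} (h : s ∈ Dw n m) : (s:ℕ)+1 < m := by
  induction m with
  | zero => simp [Dw] at h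
  | succ m ih =>
      simp only [Dw, List.mem_append] at h
      rcases h with h | h
      · exact Nat.succ_lt_succ (mem_Cw h)
      · exact Nat.lt_succ_of_lt (ih h)

/-- a letter far from all of `w` moves across `w` -/
theorem fc {w : Wd n} {t : Idx n} (h : ∀ s ∈ w, far s t) : Eqv (w ++ [t]) (t::w) := by
  induction w with
  | nil => exact Eqv.refl _
  | cons s w ih =>
      have h1 : Eqv (s::(w++[t])) (s::t::w) := (ih (fun x hx => h x (by simp [hx]))).cons s
      exact h1.trans (eqv_comm (h s (by simp)) w)

theorem Cw_zero_head {k : ℕ} (hk : 1 ≤ k) (hn : 0 < n-1) :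
    ∃ t, Cw n k = ⟨0, hn⟩ :: t := by
  induction k with
  | zero => omega
  | succ k ih =>
      rcases Nat.eq_or_lt_of_le hk with h | h
      · have hk0 : k = 0 := by omega
        subst hk0
        exact ⟨[], by simp [Cw, hn]⟩
      · obtain ⟨t, ht⟩ := ih (by omega)
        exact ⟨t ++ (if h : k < n-1 then [⟨k, h⟩] else []), by simp [Cw, ht]⟩

/-- shift relation: `C_k σ_i ≡ σ_{i+1} C_k` for `i+1 < k` -/
theorem shiftC : ∀ {k : ℕ}, k ≤ n-1 → ∀ {i j : Idx n}, (i:ℕ)+1 < k → (j:ℕ) = (i:ℕ)+1 →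
    Eqv (Cw n k ++ [i]) (j :: Cw n k) := by
  intro k
  induction k with
  | zero => intro _ i j hi _; omega
  | succ k ih =>
      intro hk i j hi hj
      have hkn : k < n-1 := by omega
      have hCk : Cw n (k+1) = Cw n k ++ [⟨k, hkn⟩] := by simp [Cw, hkn]
      rcases Nat.lt_or_ge ((i:ℕ)+1) k with h | h
      · have hfar : far (⟨k, hkn⟩ : Idx n) i := Or.inr (by simp; omega)
        have e1 : Eqv (Cw n (k+1) ++ [i]) (Cw n k ++ ([i] ++ [⟨k, hkn⟩])) := by
          rw [hCk, List.append_assoc]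
          exact Eqv.append_left _ (eqv_comm hfar [])
        have e2 : Eqv ((Cw n k ++ [i]) ++ [⟨k, hkn⟩]) ((j :: Cw n k) ++ [⟨k, hkn⟩]) :=
          (ih (by omega) h hj).append_right _
        refine (e1.trans (by rw [← List.append_assoc]; exact e2)).trans ?_
        rw [hCk]
        exact Eqv.of_eq (by simp)
      · have hik : (i:ℕ)+1 = k := by omega
        have hji : j = ⟨k, hkn⟩ := Fin.ext (by simp only [Fin.val_mk]; omega)
        have hCw : Cw n k = Cw n (i:ℕ) ++ [i] := by
          rw [← hik]
          simp [Cw, i.isLt]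
        have hadj : adj i j := Or.inl hj.symm
        have e1 : Eqv (Cw n (k+1) ++ [i]) (Cw n (i:ℕ) ++ ([i] ++ ([j] ++ ([i] ++ [])))) := by
          rw [hCk, hCw, ← hji]
          exact Eqv.of_eq (by simp)
        have e2 : Eqv (Cw n (i:ℕ) ++ ([i] ++ ([j] ++ ([i] ++ []))))
            (Cw n (i:ℕ) ++ ([j] ++ ([i] ++ ([j] ++ [])))) :=
          Eqv.append_left _ (eqv_braid hadj [])
        have e3 : Eqv (Cw n (i:ℕ) ++ [j]) (j :: Cw n (i:ℕ)) := by
          refine fc (fun s hs => ?_)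
          have := mem_Cw hs
          exact Or.inl (by omega)
        have e4 := e3.append_right ([i] ++ ([j] ++ []))
        refine ((e1.trans e2).trans (by rw [← List.append_assoc]; exact e4)).trans ?_
        refine Eqv.of_eq ?_
        rw [hCk, hCw, ← hji]
        simp

/-- every generator left-divides `Δ_m` -/
theorem dvd_Dw : ∀ {m : ℕ}, m ≤ n → ∀ {i : Idx n}, (i:ℕ) < m-1 →
    ∃ w, Eqv (Dw n m) (i::w) := by
  intro m
  induction m with
  | zero => intro _ i hi; omega
  | succ m ih =>
      intro hm i hi
      simp only [Nat.add_sub_cancel] at hi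
      by_cases h0 : (i:ℕ) = 0
      · have hn : 0 < n-1 := by have := i.isLt; omega
        obtain ⟨t, ht⟩ := Cw_zero_head (k := m) (by omega) hn
        have hiz : i = ⟨0, hn⟩ := Fin.ext h0
        refine ⟨t ++ Dw n m, Eqv.of_eq ?_⟩
        show Cw n m ++ Dw n m = _
        rw [ht, hiz]
        simp
      · have hi1 : (i:ℕ) - 1 < n - 1 := by have := i.isLt; omega
        obtain ⟨w, hw⟩ := ih (by omega) (i := ⟨(i:ℕ)-1, hi1⟩) (by simp; omega)
        have e1 : Eqv (Dw n (m+1)) ((Cw n m ++ [⟨(i:ℕ)-1, hi1⟩]) ++ w) := by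
          show Eqv (Cw n m ++ Dw n m) _
          rw [List.append_assoc]
          exact hw.append_left (Cw n m)
        have e2 : Eqv (Cw n m ++ [⟨(i:ℕ)-1, hi1⟩]) (i :: Cw n m) :=
          shiftC (by omega) (by simp; omega) (by simp; omega)
        exact ⟨Cw n m ++ w, e1.trans (by simpa using e2.append_right w)⟩

/-- `Δ_{m+1} ≡ Δ_m ⋅ reverse (C_m)` -/
theorem Dw_rev : ∀ {m : ℕ}, m ≤ n-1 → Eqv (Dw n (m+1)) (Dw n m ++ (Cw n m).reverse) := by
  intro m
  induction m with
  | zero => exact fun _ => Eqv.of_eq (by simp [Dw, Cw])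
  | succ m ih =>
      intro hm
      have hkn : m < n-1 := by omega
      have hCk : Cw n (m+1) = Cw n m ++ [⟨m, hkn⟩] := by simp [Cw, hkn]
      have e1 : Eqv (Dw n (m+2)) (Cw n (m+1) ++ (Dw n m ++ (Cw n m).reverse)) :=
        (ih (by omega)).append_left _
      have e2 : Eqv (Dw n m ++ [⟨m, hkn⟩]) ((⟨m, hkn⟩ : Idx n) :: Dw n m) := by
        refine fc (fun s hs => ?_)
        have := mem_Dw hs
        exact Or.inl (by simp; omega)
      have e3 : Eqv (Cw n m ++ (([⟨m, hkn⟩] ++ Dw n m) ++ (Cw n m).reverse))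
          (Cw n m ++ ((Dw n m ++ [⟨m, hkn⟩]) ++ (Cw n m).reverse)) :=
        Eqv.append_left _ (Eqv.append_right _ e2.symm)
      have e4 : Eqv (Dw n (m+2)) (Cw n m ++ ((Dw n m ++ [⟨m, hkn⟩]) ++ (Cw n m).reverse)) := by
        refine e1.trans ?_
        rw [hCk]
        have := e3
        simp only [List.append_assoc] at this ⊢
        exact this
      refine e4.trans (Eqv.of_eq ?_)
      show _ = Dw n (m+1) ++ (Cw n (m+1)).reverse
      rw [hCk]
      show _ = (Cw n m ++ Dw n m) ++ _
      simp

/-- `Δ_m σ_i ≡ σ_{m-2-i} Δ_m` -/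
theorem DwFlip : ∀ {m : ℕ}, m ≤ n → ∀ {i j : Idx n}, (i:ℕ)+1 < m → (j:ℕ) = m-2-(i:ℕ) →
    Eqv (Dw n m ++ [i]) (j :: Dw n m) := by
  intro m
  induction m with
  | zero => intro _ i j hi _; omega
  | succ m ih =>
      intro hm i j hi hj
      rcases Nat.lt_or_ge ((i:ℕ)+1) m with h | h
      · -- i+1 < m
        have hj' : m-2-(i:ℕ) < n-1 := by have := i.isLt; omega
        have e1 : Eqv (Dw n m ++ [i]) ((⟨m-2-(i:ℕ), hj'⟩ : Idx n) :: Dw n m) :=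
          ih (by omega) h (by simp)
        have e2 : Eqv (Dw n (m+1) ++ [i]) ((Cw n m ++ [⟨m-2-(i:ℕ), hj'⟩]) ++ Dw n m) := by
          have := e1.append_left (Cw n m)
          show Eqv ((Cw n m ++ Dw n m) ++ [i]) _
          simpa [List.append_assoc] using this
        have e3 : Eqv (Cw n m ++ [⟨m-2-(i:ℕ), hj'⟩]) (j :: Cw n m) :=
          shiftC (by omega) (by simp; omega) (by simp; omega)
        refine e2.trans ?_
        have := e3.append_right (Dw n m)
        show Eqv _ (j :: (Cw n m ++ Dw n m))
        simpa using this
      · -- i+1 = m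
        have him : (i:ℕ)+1 = m := by omega
        have hjz : (j:ℕ) = 0 := by omega
        rcases Nat.lt_or_ge m 2 with hm2 | hm2
        · have hm1 : m = 1 := by omega
          have hij : j = i := Fin.ext (by omega)
          subst hm1 hij
          have h0 : 0 < n - 1 := by have := j.isLt; omega
          have hiz : j = ⟨0, h0⟩ := Fin.ext (by simp only [Fin.val_mk]; omega)
          subst hiz
          refine Eqv.of_eq ?_
          show (Cw n 1 ++ (Cw n 0 ++ Dw n 0)) ++ [_] = _ :: (Cw n 1 ++ (Cw n 0 ++ Dw n 0))
          simp [Cw, Dw, h0]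
        · have hi1 : (i:ℕ) - 1 < n - 1 := by have := i.isLt; omega
          have e0 : Eqv (Dw n (m+1) ++ [i]) ((Dw n m ++ (Cw n m).reverse) ++ [i]) :=
            (Dw_rev (by omega)).append_right [i]
          have e1 : Eqv ((Cw n m).reverse ++ [i]) ((⟨(i:ℕ)-1, hi1⟩ : Idx n) :: (Cw n m).reverse) := by
            have := (shiftC (n := n) (k := m) (by omega) (i := ⟨(i:ℕ)-1, hi1⟩) (j := i)
              (by simp; omega) (by simp; omega)).reverse
            simpa using this.symm
          have e2 : Eqv (Dw n m ++ [⟨(i:ℕ)-1, hi1⟩]) (j :: Dw n m) :=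
            ih (by omega) (by simp; omega) (by simp; omega)
          have e3 : Eqv (Dw n (m+1) ++ [i]) (Dw n m ++ ((⟨(i:ℕ)-1, hi1⟩ : Idx n) :: (Cw n m).reverse)) :=
            (e0.trans (Eqv.of_eq (List.append_assoc _ _ _))).trans (e1.append_left (Dw n m))
          have e4 : Eqv ((Dw n m ++ [⟨(i:ℕ)-1, hi1⟩]) ++ (Cw n m).reverse)
              ((j :: Dw n m) ++ (Cw n m).reverse) := e2.append_right _
          refine (e3.trans (by simpa [List.append_assoc] using e4)).trans ?_
          exact ((Dw_rev (by omega)).symm.cons j)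

/-- the flip `i ↦ n-2-i` -/
def flipL (i : Idx n) : Idx n := ⟨n-2-(i:ℕ), by have := i.isLt; omega⟩

theorem flipL_flipL (i : Idx n) : flipL (flipL i) = i :=
  Fin.ext (by simp [flipL]; have := i.isLt; omega)

def flipW (w : Wd n) : Wd n := w.map flipL

theorem flipW_flipW (w : Wd n) : flipW (flipW w) = w := by
  simp [flipW, List.map_map, Function.comp_def, flipL_flipL]

/-- `Δ σ_i ≡ σ_{flip i} Δ` at the top level -/
theorem Dflip1 (i : Idx n) : Eqv (Dw n n ++ [i]) (flipL i :: Dw n n) :=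
  DwFlip (le_refl n) (by have := i.isLt; omega) rfl

theorem Dflip : ∀ (u : Wd n), Eqv (Dw n n ++ u) (flipW u ++ Dw n n) := by
  intro u
  induction u with
  | nil => exact Eqv.of_eq (by simp [flipW])
  | cons i u ih =>
      have e1 : Eqv (Dw n n ++ (i::u)) ((flipL i :: Dw n n) ++ u) := by
        have := (Dflip1 i).append_right u
        simpa using this
      exact e1.trans (ih.cons (flipL i))

def Dpow (n : ℕ) : ℕ → Wd n
  | 0 => []
  | (k+1) => Dw n n ++ Dpow n k

theorem comm_pow : ∀ (k : ℕ) (u : Wd n), Eqv (u ++ Dpow n k) (Dpow n k ++ flipW^[k] u) := by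
  intro k
  induction k with
  | zero => intro u; exact Eqv.of_eq (by simp [Dpow])
  | succ k ih =>
      intro u
      have e1 : Eqv (u ++ Dw n n) (Dw n n ++ flipW u) := by
        have := Dflip (flipW u)
        rw [flipW_flipW] at this
        exact this.symm
      have e2 : Eqv (u ++ Dpow n (k+1)) ((Dw n n ++ flipW u) ++ Dpow n k) := by
        show Eqv (u ++ (Dw n n ++ Dpow n k)) _
        rw [← List.append_assoc]
        exact e1.append_right _
      refine e2.trans ?_
      have e3 : Eqv (flipW u ++ Dpow n k) (Dpow n k ++ flipW^[k] (flipW u)) := ih (flipW u)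
      have := e3.append_left (Dw n n)
      rw [← Function.iterate_succ_apply] at this
      show Eqv ((Dw n n ++ flipW u) ++ Dpow n k) (Dw n n ++ Dpow n k ++ flipW^[k+1] u)
      rw [List.append_assoc, List.append_assoc]
      exact this

/-- every positive word right-divides a power of `Δ` -/
theorem rdvd_Dpow : ∀ (u : Wd n), ∃ a, Eqv (u ++ a) (Dpow n u.length) := by
  intro u
  induction u with
  | nil => exact ⟨[], Eqv.of_eq (by simp [Dpow])⟩
  | cons i u ih =>
      obtain ⟨a, ha⟩ := ih
      obtain ⟨w, hw⟩ := dvd_Dw (le_refl n) (i := i) (by have := i.isLt; omega)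
      refine ⟨a ++ flipW^[u.length] w, ?_⟩
      have e1 : Eqv (Dpow n (u.length+1)) ((i::w) ++ Dpow n u.length) := by
        show Eqv (Dw n n ++ Dpow n u.length) _
        exact hw.append_right _
      have e2 : Eqv (w ++ Dpow n u.length) (Dpow n u.length ++ flipW^[u.length] w) :=
        comm_pow u.length w
      have e3 : Eqv (Dpow n u.length) (u ++ a) := ha.symm
      have e4 : Eqv (i :: (w ++ Dpow n u.length)) (i :: ((u ++ a) ++ flipW^[u.length] w)) :=
        ((e2.trans (e3.append_right _)).cons i)
      have e5 : Eqv (Dpow n (u.length+1)) (i :: ((u ++ a) ++ flipW^[u.length] w)) :=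
        e1.trans e4
      refine (Eqv.of_eq ?_).trans e5.symm
      simp [List.append_assoc]

end Braid
namespace Braid

variable {n : ℕ}

instance eqvSetoid (n : ℕ) : Setoid (Wd n) :=
  ⟨Eqv, fun u => Eqv.refl u, Eqv.symm, Eqv.trans⟩

/-- the positive braid monoid, as presented monoid -/
def BM (n : ℕ) := Quotient (eqvSetoid n)

def mkW (w : Wd n) : BM n := Quotient.mk _ w

instance : Monoid (BM n) where
  mul := Quotient.map₂ (·++·) (fun _ _ ha _ _ hb => ha.append hb)
  one := mkW []
  mul_assoc := by
    intro a b c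
    induction a using Quotient.ind
    induction b using Quotient.ind
    induction c using Quotient.ind
    exact congrArg (Quotient.mk _) (List.append_assoc _ _ _)
  one_mul := by
    intro a; induction a using Quotient.ind
    exact congrArg (Quotient.mk _) (List.nil_append _)
  mul_one := by
    intro a; induction a using Quotient.ind
    exact congrArg (Quotient.mk _) (List.append_nil _)

theorem mkW_mul (u v : Wd n) : mkW u * mkW v = mkW (u ++ v) := rfl

theorem mkW_eq {u v : Wd n} (h : Eqv u v) : mkW u = mkW v := Quotient.sound h

theorem mkW_exact {u v : Wd n} (h : mkW u = mkW v) : Eqv u v := Quotient.exact h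

/-- cancellation of a single letter, from Garside's lemma -/
theorem cancel_letter {i : Idx n} {x y : Wd n} (h : Eqv (i::x) (i::y)) : Eqv x y := by
  obtain ⟨w, h1, h2⟩ := garside_main (x.length+1) x y i i (Nat.lt_succ_self _) h
  rw [comp_self] at h1 h2
  simp only [List.nil_append] at h1 h2
  exact h1.trans h2.symm

theorem eqv_left_cancel : ∀ (u : Wd n) {x y : Wd n}, Eqv (u++x) (u++y) → Eqv x y := by
  intro u
  induction u with
  | nil => intro x y h; simpa using h
  | cons i u ih => intro x y h; exact ih (cancel_letter h)

theorem eqv_right_cancel (u : Wd n) {x y : Wd n} (h : Eqv (x++u) (y++u)) : Eqv x y := by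
  have := eqv_left_cancel u.reverse (x := x.reverse) (y := y.reverse) (by simpa using h.reverse)
  simpa using this.reverse

instance : CancelMonoid (BM n) where
  mul_left_cancel := by
    intro a b c h
    induction a using Quotient.ind
    induction b using Quotient.ind
    induction c using Quotient.ind
    exact Quotient.sound (eqv_left_cancel _ (Quotient.exact h))
  mul_right_cancel := by
    intro a b c h
    induction a using Quotient.ind
    induction b using Quotient.ind
    induction c using Quotient.ind
    exact Quotient.sound (eqv_right_cancel _ (Quotient.exact h))

theorem Dpow_add (k l : ℕ) : Dpow n (k+l) = Dpow n k ++ Dpow n l := by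
  induction k with
  | zero => simp [Dpow]
  | succ k ih =>
      have h : k+1+l = (k+l)+1 := by omega
      rw [h]
      show Dw n n ++ Dpow n (k+l) = _
      rw [ih]
      simp [Dpow, List.append_assoc]

theorem rdvd_Dpow' (u : Wd n) {K : ℕ} (hK : u.length ≤ K) :
    ∃ a, Eqv (u ++ a) (Dpow n K) := by
  obtain ⟨a, ha⟩ := rdvd_Dpow u
  refine ⟨a ++ Dpow n (K - u.length), ?_⟩
  have := ha.append_right (Dpow n (K - u.length))
  rw [← Dpow_add, Nat.add_sub_cancel' hK] at this
  simpa [List.append_assoc] using this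

/-- common left multiples -/
theorem common_left (u v : Wd n) : ∃ a b, Eqv (a ++ u) (b ++ v) := by
  set K := max u.length v.length
  obtain ⟨a, ha⟩ := rdvd_Dpow' u.reverse (K := K) (by simp [K])
  obtain ⟨b, hb⟩ := rdvd_Dpow' v.reverse (K := K) (by simp [K])
  refine ⟨a.reverse, b.reverse, ?_⟩
  have := (ha.trans hb.symm).reverse
  simpa using this

theorem common_left_BM (r s : BM n) : ∃ p : BM n × BM n, p.1 * r = p.2 * s := by
  induction r using Quotient.ind with | _ u =>
  induction s using Quotient.ind with | _ v =>
  obtain ⟨a, b, h⟩ := common_left u v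
  exact ⟨(mkW a, mkW b), Quotient.sound h⟩

noncomputable instance : OreLocalization.OreSet (⊤ : Submonoid (BM n)) where
  ore_right_cancel r₁ r₂ s h := ⟨1, by have := mul_right_cancel h; simp [this]⟩
  oreNum r s := (Classical.choose (common_left_BM r (s : BM n))).2
  oreDenom r s := ⟨(Classical.choose (common_left_BM r (s : BM n))).1, trivial⟩
  ore_eq r s := Classical.choose_spec (common_left_BM r (s : BM n))

end Braid
namespace Braid

variable {n : ℕ}

theorem rel_one {r : FreeGroup (Fin (n-1))} (hr : r ∈ braidRels n) :
    PresentedGroup.mk (braidRels n) r = 1 :=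
  (QuotientGroup.eq_one_iff r).mpr (Subgroup.subset_normalClosure hr)

theorem braid_comm_G {i j : Idx n} (h : (i:ℕ)+2 ≤ (j:ℕ)) :
    braidGen (n := n) i * braidGen j = braidGen j * braidGen i := by
  have hr : FreeGroup.of i * FreeGroup.of j * (FreeGroup.of j * FreeGroup.of i)⁻¹ ∈ braidRels n :=
    Or.inl ⟨i, j, h, rfl⟩
  have h1 := rel_one hr
  rw [map_mul, map_inv, map_mul, map_mul, mul_inv_eq_one] at h1
  exact h1

theorem braid_braid_G {i j : Idx n} (h : (i:ℕ)+1 = (j:ℕ)) :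
    braidGen (n := n) i * braidGen j * braidGen i = braidGen j * braidGen i * braidGen j := by
  have hr : FreeGroup.of i * FreeGroup.of j * FreeGroup.of i *
      (FreeGroup.of j * FreeGroup.of i * FreeGroup.of j)⁻¹ ∈ braidRels n :=
    Or.inr ⟨i, j, h, rfl⟩
  have h1 := rel_one hr
  rw [map_mul, map_inv, map_mul, map_mul, map_mul, map_mul, mul_inv_eq_one] at h1
  exact h1

/-- evaluation of a positive word in the braid group -/
def evW (w : Wd n) : BraidGroup n := (w.map braidGen).prod

theorem evW_nil : evW ([] : Wd n) = 1 := rfl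

theorem evW_cons (i : Idx n) (w : Wd n) : evW (i::w) = braidGen i * evW w := by
  simp [evW]

theorem evW_append (u v : Wd n) : evW (u ++ v) = evW u * evW v := by
  simp [evW]

theorem evW_brel {p q : Wd n} (h : Brel n p q) : evW p = evW q := by
  cases h with
  | comm i j hij => simp [evW, ← mul_assoc, braid_comm_G hij]
  | braid i j hij =>
      simp only [evW, List.map_cons, List.map_nil, List.prod_cons, List.prod_nil, mul_one,
        ← mul_assoc]
      exact braid_braid_G hij

theorem evW_step {u v : Wd n} (h : Step u v) : evW u = evW v := by
  obtain ⟨a,b,p,q,hr,rfl,rfl⟩ := h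
  rcases hr with h | h
  · rw [evW_append, evW_append, evW_append, evW_append, evW_brel h]
  · rw [evW_append, evW_append, evW_append, evW_append, evW_brel h]

theorem evW_eqv {u v : Wd n} (h : Eqv u v) : evW u = evW v := by
  obtain ⟨k, hk⟩ := h
  induction k generalizing u with
  | zero => rw [show u = v from hk]
  | succ k ih =>
      obtain ⟨z, hz, hs⟩ := hk
      rw [evW_step hz]; exact ih hs

theorem evW_mem (w : Wd n) : evW w ∈ PosBraid n := by
  induction w with
  | nil => exact one_mem _
  | cons i w ih =>
      rw [evW_cons]
      exact mul_mem (Submonoid.subset_closure ⟨i, rfl⟩) ih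

theorem mem_posBraid_iff {x : BraidGroup n} : x ∈ PosBraid n ↔ ∃ w : Wd n, evW w = x := by
  constructor
  · intro hx
    induction hx using Submonoid.closure_induction with
    | mem y hy => obtain ⟨i, rfl⟩ := hy; exact ⟨[i], by simp [evW]⟩
    | one => exact ⟨[], rfl⟩
    | mul y z _ _ hy hz =>
        obtain ⟨u, rfl⟩ := hy; obtain ⟨v, rfl⟩ := hz
        exact ⟨u ++ v, evW_append u v⟩
  · rintro ⟨w, rfl⟩; exact evW_mem w

/-- the Ore localization of the positive monoid -/
abbrev OLoc (n : ℕ) := OreLocalization (⊤ : Submonoid (BM n)) (BM n)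

noncomputable def fgen (i : Idx n) : (OLoc n)ˣ :=
  (OreLocalization.numerator_isUnit (⟨mkW [i], trivial⟩ : (⊤ : Submonoid (BM n)))).unit

theorem fgen_val (i : Idx n) : (fgen i : OLoc n) = OreLocalization.numeratorHom (mkW [i]) :=
  IsUnit.unit_spec _

theorem fgen_rels : ∀ r ∈ braidRels n, FreeGroup.lift fgen r = 1 := by
  rintro r (⟨i, j, hij, rfl⟩ | ⟨i, j, hij, rfl⟩)
  · rw [map_mul, map_inv, map_mul, map_mul, mul_inv_eq_one]
    simp only [FreeGroup.lift_apply_of]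
    refine Units.ext ?_
    push_cast [fgen_val]
    rw [← map_mul, ← map_mul, mkW_mul, mkW_mul]
    exact congrArg _ (mkW_eq (eqv_comm (Or.inl hij) []))
  · rw [map_mul, map_inv, map_mul, map_mul, map_mul, map_mul, mul_inv_eq_one]
    simp only [FreeGroup.lift_apply_of]
    refine Units.ext ?_
    push_cast [fgen_val]
    rw [← map_mul, ← map_mul, ← map_mul, ← map_mul, mkW_mul, mkW_mul, mkW_mul, mkW_mul]
    exact congrArg _ (mkW_eq (eqv_braid (Or.inl hij) []))

noncomputable def toLoc : BraidGroup n →* (OLoc n)ˣ := PresentedGroup.toGroup fgen_rels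

theorem toLoc_gen (i : Idx n) : toLoc (braidGen i) = fgen i :=
  PresentedGroup.toGroup.of fgen_rels

theorem toLoc_evW (w : Wd n) :
    ((toLoc (evW w) : (OLoc n)ˣ) : OLoc n) = OreLocalization.numeratorHom (mkW w) := by
  induction w with
  | nil =>
      rw [evW_nil, map_one]
      show _ = OreLocalization.numeratorHom (1 : BM n)
      simp
      exact OreLocalization.one_def
  | cons i w ih =>
      rw [evW_cons, map_mul, toLoc_gen]
      push_cast [fgen_val, ih]
      rw [← map_mul, mkW_mul]
      rfl

theorem num_inj : Function.Injective
    (OreLocalization.numeratorHom : BM n → OLoc n) := by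
  intro r r' h
  rw [OreLocalization.numeratorHom_apply, OreLocalization.numeratorHom_apply,
    OreLocalization.oreDiv_eq_iff] at h
  obtain ⟨u, v, h1, h2⟩ := h
  simp only [OneMemClass.coe_one, mul_one] at h2
  simp only [Submonoid.smul_def, smul_eq_mul] at h1
  rw [h2] at h1
  exact (mul_left_cancel h1).symm

/-- THE EMBEDDING: positive words equal in the braid group are positively equivalent -/
theorem embed {u v : Wd n} (h : evW u = evW v) : Eqv u v := by
  refine mkW_exact (num_inj ?_)
  rw [← toLoc_evW, ← toLoc_evW, h]

end Braid
namespace Braid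

variable {n : ℕ}

/-! ### length homomorphism -/

theorem len_rels : ∀ r ∈ braidRels n,
    FreeGroup.lift (fun _ => Multiplicative.ofAdd (1:ℤ)) r = 1 := by
  rintro r (⟨i, j, _, rfl⟩ | ⟨i, j, _, rfl⟩) <;>
    · simp only [map_mul, map_inv, FreeGroup.lift_apply_of]
      group

noncomputable def lenG : BraidGroup n →* Multiplicative ℤ := PresentedGroup.toGroup len_rels

noncomputable def len (x : BraidGroup n) : ℤ := Multiplicative.toAdd (lenG x)

theorem len_one : len (1 : BraidGroup n) = 0 := by
  show Multiplicative.toAdd (lenG (1 : BraidGroup n)) = 0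
  rw [map_one]; rfl

theorem len_mul (x y : BraidGroup n) : len (x*y) = len x + len y := by
  simp [len, map_mul]

theorem len_gen (i : Idx n) : len (braidGen i) = 1 :=
  congrArg Multiplicative.toAdd (PresentedGroup.toGroup.of len_rels)

theorem len_evW (w : Wd n) : len (evW w) = w.length := by
  induction w with
  | nil => simp [evW_nil, len_one]
  | cons i w ih =>
      rw [evW_cons, len_mul, len_gen, ih]
      simp only [List.length_cons]
      push_cast; ring

theorem len_nonneg {x : BraidGroup n} (hx : x ∈ PosBraid n) : 0 ≤ len x := by
  obtain ⟨w, rfl⟩ := mem_posBraid_iff.mp hx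
  rw [len_evW]; positivity

theorem eq_one_of_len {x : BraidGroup n} (hx : x ∈ PosBraid n) (h : len x = 0) : x = 1 := by
  obtain ⟨w, rfl⟩ := mem_posBraid_iff.mp hx
  rw [len_evW] at h
  have : w = [] := List.eq_nil_of_length_eq_zero (by exact_mod_cast h)
  rw [this, evW_nil]

theorem len_pos {x : BraidGroup n} (hx : x ∈ PosBraid n) (h : x ≠ 1) : 1 ≤ len x := by
  rcases Int.lt_or_le 0 (len x) with h' | h'
  · omega
  · exact absurd (eq_one_of_len hx (le_antisymm h' (len_nonneg hx))) h

/-! ### divisibility basics -/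

theorem dvdL_refl (x : BraidGroup n) : DividesL x x := ⟨1, one_mem _, (mul_one x).symm⟩

theorem dvdL_trans {x y z : BraidGroup n} (h1 : DividesL x y) (h2 : DividesL y z) :
    DividesL x z := by
  obtain ⟨a, ha, rfl⟩ := h1
  obtain ⟨b, hb, rfl⟩ := h2
  exact ⟨a*b, mul_mem ha hb, mul_assoc _ _ _⟩

theorem dividesL_mul_right {x y : BraidGroup n} (hy : y ∈ PosBraid n) : DividesL x (x*y) :=
  ⟨y, hy, rfl⟩

theorem dvdL_mul_left {x y : BraidGroup n} (c : BraidGroup n) (h : DividesL x y) :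
    DividesL (c*x) (c*y) := by
  obtain ⟨a, ha, rfl⟩ := h
  exact ⟨a, ha, (mul_assoc _ _ _).symm⟩

theorem dvdL_of_mul_left {x y c : BraidGroup n} (h : DividesL (c*x) (c*y)) :
    DividesL x y := by
  obtain ⟨a, ha, hy⟩ := h
  exact ⟨a, ha, by rw [mul_assoc] at hy; exact mul_left_cancel hy⟩

theorem dvdL_mul_left_ap {x y : BraidGroup n} (h : DividesL x y) (c : BraidGroup n) :
    DividesL (c*x) (c*y) := dvdL_mul_left c h

theorem dvdL_mem {x y : BraidGroup n} (hx : x ∈ PosBraid n) (h : DividesL x y) :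
    y ∈ PosBraid n := by
  obtain ⟨a, ha, rfl⟩ := h
  exact mul_mem hx ha

theorem dvdL_mem_ap {x y : BraidGroup n} (h : DividesL x y) (hx : x ∈ PosBraid n) :
    y ∈ PosBraid n := dvdL_mem hx h

theorem dividesL_antisymm {x y : BraidGroup n} (hx : x ∈ PosBraid n)
    (h1 : DividesL x y) (h2 : DividesL y x) : x = y := by
  obtain ⟨a, ha, rfl⟩ := h1
  obtain ⟨b, hb, hx2⟩ := h2
  have h3 : a * b = 1 := by
    have : x * (a * b) = x * 1 := by rw [mul_one, ← mul_assoc]; exact hx2.symm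
    exact mul_left_cancel this
  have ha0 : len a = 0 := by
    have := len_mul a b
    rw [h3, len_one] at this
    have h4 := len_nonneg ha; have h5 := len_nonneg hb
    omega
  rw [eq_one_of_len ha ha0, mul_one]

theorem len_le_of_dvd {x y : BraidGroup n} (h : DividesL x y) : len x ≤ len y := by
  obtain ⟨a, ha, rfl⟩ := h
  have := len_nonneg ha
  rw [len_mul]; omega

theorem eq_of_dvd_of_len {x y : BraidGroup n} (hx : x ∈ PosBraid n) (h : DividesL x y)
    (hl : len y ≤ len x) : x = y := by
  obtain ⟨a, ha, rfl⟩ := h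
  have h1 := len_nonneg ha
  rw [len_mul] at hl
  rw [eq_one_of_len ha (by omega), mul_one]

theorem head_of_ne_one {x : BraidGroup n} (hx : x ∈ PosBraid n) (h : x ≠ 1) :
    ∃ (i : Idx n) (y : BraidGroup n), y ∈ PosBraid n ∧ x = braidGen i * y := by
  obtain ⟨w, rfl⟩ := mem_posBraid_iff.mp hx
  match w with
  | [] => exact absurd evW_nil h
  | (i::w) => exact ⟨i, evW w, evW_mem w, evW_cons i w⟩

/-! ### the lcm of two generators divides any common multiple -/

theorem lcm_word_eq (i j : Idx n) : evW ([i] ++ comp i j) = evW ([j] ++ comp j i) := by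
  by_cases hij : i = j
  · subst hij; rfl
  · rcases far_or_adj hij with h | h
    · rw [comp_far h, comp_far h.symm]
      exact evW_eqv (eqv_comm h [])
    · rw [comp_adj h, comp_adj h.symm]
      exact evW_eqv (eqv_braid h [])

theorem L1 {i j : Idx n} {z : BraidGroup n} (hz : z ∈ PosBraid n)
    (hi : DividesL (braidGen i) z) (hj : DividesL (braidGen j) z) :
    DividesL (evW ([i] ++ comp i j)) z := by
  obtain ⟨a, ha, hza⟩ := hi
  obtain ⟨b, hb, hzb⟩ := hj
  obtain ⟨u, rfl⟩ := mem_posBraid_iff.mp ha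
  obtain ⟨v, rfl⟩ := mem_posBraid_iff.mp hb
  have hev : evW (i::u) = evW (j::v) := by
    rw [evW_cons, evW_cons, ← hza, ← hzb]
  obtain ⟨w, h1, _⟩ := garside_main (u.length+1) u v i j (Nat.lt_succ_self _) (embed hev)
  refine ⟨evW w, evW_mem w, ?_⟩
  rw [hza, evW_eqv h1, evW_append, ← mul_assoc, ← evW_cons]
  rfl

/-! ### conditional lcm -/

theorem lcm_cond : ∀ (N : ℕ) (z : BraidGroup n), z ∈ PosBraid n → (len z).toNat ≤ N →
    ∀ d e, d ∈ PosBraid n → e ∈ PosBraid n → DividesL d z → DividesL e z →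
    ∃ u, u ∈ PosBraid n ∧ DividesL d u ∧ DividesL e u ∧
      (∀ m, DividesL d m → DividesL e m → DividesL u m) := by
  intro N
  induction N with
  | zero =>
      intro z hz hN d e hd he hdz hez
      have h0 : len z ≤ 0 := by omega
      have hz1 : z = 1 := eq_one_of_len hz (le_antisymm h0 (len_nonneg hz))
      subst hz1
      have hd1 : d = 1 := by
        refine eq_one_of_len hd ?_
        have h1 := len_le_of_dvd hdz
        have h2 := len_nonneg hd
        rw [len_one] at h1; omega
      subst hd1
      exact ⟨e, he, ⟨e, he, (one_mul e).symm⟩, dvdL_refl e, fun m _ h2 => h2⟩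
  | succ N ih =>
      intro z hz hN d e hd he hdz hez
      by_cases hd1 : d = 1
      · subst hd1
        exact ⟨e, he, ⟨e, he, (one_mul e).symm⟩, dvdL_refl e, fun m _ h2 => h2⟩
      by_cases he1 : e = 1
      · subst he1
        exact ⟨d, hd, dvdL_refl d, ⟨d, hd, (one_mul d).symm⟩, fun m h1 _ => h1⟩
      obtain ⟨i, d₁, hd₁, rfl⟩ := head_of_ne_one hd hd1
      obtain ⟨j, e₁, he₁, rfl⟩ := head_of_ne_one he he1
      have hgiz : DividesL (braidGen i) z :=
        dvdL_trans (dividesL_mul_right hd₁) hdz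
      have hgjz : DividesL (braidGen j) z :=
        dvdL_trans (dividesL_mul_right he₁) hez
      -- z = σ_i * z₁
      obtain ⟨z₁', hz₁', hzz₁'⟩ := id hgiz
      have hlz₁ : (len z₁').toNat ≤ N := by
        have h1 := len_pos hz (by
          rintro rfl
          have := len_le_of_dvd hdz
          have h2 := len_pos (mul_mem (Submonoid.subset_closure ⟨i, rfl⟩) hd₁) hd1
          rw [len_one] at this; omega)
        have h2 : len z = 1 + len z₁' := by rw [hzz₁', len_mul, len_gen]
        have h3 := len_nonneg hz₁'
        omega
      by_cases hij : i = j
      · subst hij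
        -- common head
        have hdz₁ : DividesL d₁ z₁' := by
          obtain ⟨q, hq, hzq⟩ := id hdz
          refine ⟨q, hq, ?_⟩
          have : braidGen i * z₁' = braidGen i * (d₁ * q) := by
            rw [← hzz₁', hzq, mul_assoc]
          exact mul_left_cancel this
        have hez₁ : DividesL e₁ z₁' := by
          obtain ⟨q, hq, hzq⟩ := id hez
          refine ⟨q, hq, ?_⟩
          have : braidGen i * z₁' = braidGen i * (e₁ * q) := by
            rw [← hzz₁', hzq, mul_assoc]
          exact mul_left_cancel this
        obtain ⟨u₁, hu₁, hdu₁, heu₁, hleast⟩ := ih z₁' hz₁' hlz₁ d₁ e₁ hd₁ he₁ hdz₁ hez₁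
        refine ⟨braidGen i * u₁, mul_mem (Submonoid.subset_closure ⟨i, rfl⟩) hu₁,
          dvdL_mul_left_ap hdu₁ _, dvdL_mul_left_ap heu₁ _, ?_⟩
        intro m h1 h2
        obtain ⟨q, hq, hmq⟩ := h1
        have hm₁ : m = braidGen i * (d₁ * q) := by rw [hmq, mul_assoc]
        have h1' : DividesL d₁ (d₁ * q) := ⟨q, hq, rfl⟩
        have h2' : DividesL e₁ (d₁ * q) := by
          obtain ⟨q', hq', hmq'⟩ := h2
          refine ⟨q', hq', mul_left_cancel (G := BraidGroup n) (a := braidGen i) ?_⟩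
          rw [← hm₁, hmq', mul_assoc]
        have := hleast (d₁ * q) h1' h2'
        rw [hm₁]
        exact dvdL_mul_left_ap this _
      · -- distinct heads: use L1
        have hWz := L1 hz hgiz hgjz
        have hWi : evW ([i] ++ comp i j) = braidGen i * evW (comp i j) := by
          rw [evW_append, evW_cons, evW_nil, mul_one]
        have hWj : evW ([i] ++ comp i j) = braidGen j * evW (comp j i) := by
          rw [lcm_word_eq, evW_append, evW_cons, evW_nil, mul_one]
        -- z₁ = σ_i⁻¹ z
        have hdz₁ : DividesL d₁ z₁' := by
          obtain ⟨q, hq, hzq⟩ := id hdz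
          exact ⟨q, hq, mul_left_cancel (a := braidGen i) (by rw [← hzz₁', hzq, mul_assoc])⟩
        have haz₁ : DividesL (evW (comp i j)) z₁' := by
          obtain ⟨t, ht, hzt⟩ := id hWz
          exact ⟨t, ht, mul_left_cancel (a := braidGen i) (by
            rw [← hzz₁', hzt, hWi, mul_assoc])⟩
        obtain ⟨u₁, hu₁, hdu₁, hau₁, hleast₁⟩ := ih z₁' hz₁' hlz₁ d₁ (evW (comp i j)) hd₁ (evW_mem _) hdz₁ haz₁
        have hwgdef : braidGen i * u₁ = braidGen i * u₁ := rfl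
        have hwgM : (braidGen i * u₁) ∈ PosBraid n := mul_mem (Submonoid.subset_closure ⟨i, rfl⟩) hu₁
        -- (braidGen i * u₁) is the lcm of d and σ_j
        have hdwg : DividesL (braidGen i * d₁) (braidGen i * u₁) := dvdL_mul_left_ap hdu₁ _
        have hjwg : DividesL (braidGen j) (braidGen i * u₁) := by
          obtain ⟨c, hc, hueq⟩ := hau₁
          refine ⟨evW (comp j i) * c, mul_mem (evW_mem _) hc, ?_⟩
          rw [hueq, ← mul_assoc, ← hWi, hWj, mul_assoc]
        have hPropA : ∀ m, DividesL (braidGen i * d₁) m → DividesL (braidGen j) m →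
            DividesL (braidGen i * u₁) m := by
          intro m h1 h2
          have hmM : m ∈ PosBraid n := dvdL_mem_ap h1 (mul_mem (Submonoid.subset_closure ⟨i, rfl⟩) hd₁)
          have hgim : DividesL (braidGen i) m := dvdL_trans (dividesL_mul_right hd₁) h1
          have hWm := L1 hmM hgim h2
          obtain ⟨tm, htm, hmtm⟩ := hWm
          obtain ⟨qm, hqm, hmqm⟩ := h1
          have hm₁d : DividesL d₁ (evW (comp i j) * tm) := by
            refine ⟨qm, hqm, mul_left_cancel (a := braidGen i) ?_⟩
            rw [← mul_assoc, ← hWi, ← hmtm, hmqm, mul_assoc]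
          have hm₁a : DividesL (evW (comp i j)) (evW (comp i j) * tm) := ⟨tm, htm, rfl⟩
          have := hleast₁ (evW (comp i j) * tm) hm₁d hm₁a
          have h3 : m = braidGen i * (evW (comp i j) * tm) := by rw [hmtm, hWi, mul_assoc]
          rw [h3]
          exact dvdL_mul_left_ap this _
        have hwgz : DividesL (braidGen i * u₁) z := hPropA z hdz hgjz
        -- now split off σ_j
        have hez₂ : ∃ z₂, z₂ ∈ PosBraid n ∧ z = braidGen j * z₂ ∧ (len z₂).toNat ≤ N := by
          obtain ⟨q, hq, hzq⟩ := id hez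
          refine ⟨e₁ * q, mul_mem he₁ hq, by rw [hzq, mul_assoc], ?_⟩
          have h2 : len z = 1 + len (e₁ * q) := by
            rw [hzq, mul_assoc, len_mul, len_gen]
          have h3 := len_nonneg (mul_mem he₁ hq)
          have h4 := len_pos hz (by
            rintro rfl
            have := len_le_of_dvd hez
            have h5 := len_pos (mul_mem (Submonoid.subset_closure ⟨j, rfl⟩) he₁) he1
            rw [len_one] at this; omega)
          omega
        obtain ⟨z₂, hz₂, hzz₂, hlz₂⟩ := hez₂
        obtain ⟨c', hc', hwgc⟩ := id hjwg
        -- w₁ := σ_j⁻¹ (braidGen i * u₁) = c'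
        have hw₁z₂ : DividesL c' z₂ := by
          obtain ⟨s, hs, hzs⟩ := id hwgz
          refine ⟨s, hs, mul_left_cancel (a := braidGen j) ?_⟩
          rw [← hzz₂, hzs, hwgc, mul_assoc]
        have hez₂' : DividesL e₁ z₂ := by
          obtain ⟨q, hq, hzq⟩ := id hez
          exact ⟨q, hq, mul_left_cancel (a := braidGen j) (by rw [← hzz₂, hzq, mul_assoc])⟩
        obtain ⟨u₂, hu₂, hwu₂, heu₂, hleast₂⟩ := ih z₂ hz₂ hlz₂ c' e₁ hc' he₁ hw₁z₂ hez₂'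
        refine ⟨braidGen j * u₂, mul_mem (Submonoid.subset_closure ⟨j, rfl⟩) hu₂, ?_, ?_, ?_⟩
        · -- d divides
          refine dvdL_trans ?_ (dvdL_mul_left_ap hwu₂ (braidGen j))
          rw [← hwgc]
          exact hdwg
        · exact dvdL_mul_left_ap heu₂ _
        · intro m h1 h2
          have hwgm : DividesL (braidGen i * u₁) m :=
            hPropA m h1 (dvdL_trans (dividesL_mul_right he₁) h2)
          obtain ⟨s', hs', hms'⟩ := id hwgm
          have hm2 : m = braidGen j * (c' * s') := by rw [hms', hwgc, mul_assoc]
          have hq1 : DividesL c' (c' * s') := ⟨s', hs', rfl⟩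
          have hq2 : DividesL e₁ (c' * s') := by
            obtain ⟨q'', hq'', hmq''⟩ := h2
            exact ⟨q'', hq'', mul_left_cancel (a := braidGen j) (by
              rw [← hm2, hmq'', mul_assoc])⟩
          have := hleast₂ (c' * s') hq1 hq2
          rw [hm2]
          exact dvdL_mul_left_ap this _

end Braid
namespace Braid

variable {n : ℕ}

/-! ### unconditional lcm -/

theorem lcm_exists {d e : BraidGroup n} (hd : d ∈ PosBraid n) (he : e ∈ PosBraid n) :
    ∃ u, u ∈ PosBraid n ∧ DividesL d u ∧ DividesL e u ∧
      ∀ m, DividesL d m → DividesL e m → DividesL u m := by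
  obtain ⟨u, rfl⟩ := mem_posBraid_iff.mp hd
  obtain ⟨v, rfl⟩ := mem_posBraid_iff.mp he
  obtain ⟨a, ha⟩ := rdvd_Dpow' u (K := max u.length v.length) (le_max_left _ _)
  obtain ⟨b, hb⟩ := rdvd_Dpow' v (K := max u.length v.length) (le_max_right _ _)
  have hza : DividesL (evW u) (evW (Dpow n (max u.length v.length))) :=
    ⟨evW a, evW_mem a, by rw [← evW_append, evW_eqv ha]⟩
  have hzb : DividesL (evW v) (evW (Dpow n (max u.length v.length))) :=
    ⟨evW b, evW_mem b, by rw [← evW_append, evW_eqv hb]⟩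
  exact lcm_cond _ _ (evW_mem _) (le_refl _) _ _ (evW_mem u) (evW_mem v) hza hzb

/-! ### Δ facts in the group -/

theorem evW_Cw : ∀ (m : ℕ), evW (Cw n m) =
    ((List.range m).map (fun i => if h : i < n - 1 then braidGen ⟨i, h⟩ else 1)).prod := by
  intro m
  induction m with
  | zero => simp [Cw, evW_nil]
  | succ m ih =>
      rw [List.range_succ, List.map_append, List.prod_append]
      show evW (Cw n m ++ _) = _
      rw [evW_append, ih]
      congr 1
      by_cases h : m < n-1
      · simp [h, evW]
      · simp [h, evW_nil]

theorem evW_Dw : ∀ (m : ℕ), evW (Dw n m) = deltaAux n m := by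
  intro m
  induction m with
  | zero => rfl
  | succ m ih =>
      show evW (Cw n m ++ Dw n m) = _
      rw [evW_append, ih, evW_Cw]
      rfl

theorem evW_Delta : evW (Dw n n) = braidDelta n := evW_Dw n

theorem delta_mem : braidDelta n ∈ PosBraid n := by
  rw [← evW_Delta]; exact evW_mem _

theorem gen_dvd_delta (i : Idx n) : DividesL (braidGen i) (braidDelta n) := by
  obtain ⟨w, hw⟩ := dvd_Dw (le_refl n) (i := i) (by have := i.isLt; omega)
  exact ⟨evW w, evW_mem w, by rw [← evW_Delta, evW_eqv hw, evW_cons]⟩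

theorem delta_flip {x : BraidGroup n} (hx : x ∈ PosBraid n) :
    ∃ x', x' ∈ PosBraid n ∧ x * braidDelta n = braidDelta n * x' := by
  obtain ⟨u, rfl⟩ := mem_posBraid_iff.mp hx
  refine ⟨evW (flipW u), evW_mem _, ?_⟩
  have h := evW_eqv (Dflip (flipW u))
  rw [flipW_flipW, evW_append, evW_append, evW_Delta] at h
  exact h.symm

theorem delta_dvd_mul_delta {s : BraidGroup n} (hs : s ∈ PosBraid n) :
    DividesL (braidDelta n) (s * braidDelta n) := by
  obtain ⟨s', hs', heq⟩ := delta_flip hs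
  exact ⟨s', hs', heq⟩

/-! ### gcd -/

theorem gcd_exists {x y : BraidGroup n} (hx : x ∈ PosBraid n) (hy : y ∈ PosBraid n) :
    ∃ g, IsLeftGcd g x y := by
  classical
  set S : Set ℕ := {k | ∃ d, d ∈ PosBraid n ∧ DividesL d x ∧ DividesL d y ∧ (len d).toNat = k}
    with hS
  have h0 : 0 ∈ S :=
    ⟨1, one_mem _, ⟨x, hx, (one_mul x).symm⟩, ⟨y, hy, (one_mul y).symm⟩, by simp [len_one]⟩
  have hbdd : ∀ k ∈ S, k ≤ (len x).toNat := by
    rintro k ⟨d, hd, hdx, _, rfl⟩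
    exact Int.toNat_le_toNat (len_le_of_dvd hdx)
  set K := Nat.findGreatest (· ∈ S) ((len x).toNat) with hK
  have hKS : K ∈ S := Nat.findGreatest_spec (Nat.zero_le _) h0
  have hKmax : ∀ k, K < k → k ≤ (len x).toNat → k ∉ S :=
    fun k h1 h2 => Nat.findGreatest_is_greatest h1 h2
  obtain ⟨g, hgM, hgx, hgy, hglen⟩ := hKS
  refine ⟨g, hgM, hgx, hgy, ?_⟩
  intro d hdM hdx hdy
  obtain ⟨u, huM, hgu, hdu, hleast⟩ := lcm_exists hgM hdM
  have hux : DividesL u x := hleast x hgx hdx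
  have huy : DividesL u y := hleast y hgy hdy
  have huS : (len u).toNat ∈ S := ⟨u, huM, hux, huy, rfl⟩
  have hle : (len u).toNat ≤ K := by
    by_contra hcon
    exact hKmax _ (by omega) (hbdd _ huS) huS
  have hlen : len u ≤ len g := by
    have h1 := len_nonneg huM
    have h2 := len_nonneg hgM
    omega
  have : g = u := eq_of_dvd_of_len hgM hgu hlen
  rw [this]
  exact hdu

theorem gcd_unique {g g' x y : BraidGroup n} (h : IsLeftGcd g x y) (h' : IsLeftGcd g' x y) :
    g = g' :=
  dividesL_antisymm h.1 (h'.2.2.2 g h.1 h.2.1 h.2.2.1) (h.2.2.2 g' h'.1 h'.2.1 h'.2.2.1)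

/-! ### normality manipulation -/

theorem gnormal_extend {s t y : BraidGroup n} (hs : s ∈ PosBraid n) (hy : y ∈ PosBraid n)
    (hst : IsLeftGcd s (s*t) (braidDelta n)) (hty : IsLeftGcd t y (braidDelta n)) :
    IsLeftGcd s (s*y) (braidDelta n) := by
  obtain ⟨htM, htyd, htΔ, htleast⟩ := hty
  obtain ⟨hsM, hstd, hsΔ, hsleast⟩ := hst
  refine ⟨hs, dividesL_mul_right hy, hsΔ, ?_⟩
  intro d hdM hdxy hdΔ
  obtain ⟨u, huM, hsu, hdu, hleast⟩ := lcm_exists hs hdM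
  have husy : DividesL u (s*y) := hleast _ (dividesL_mul_right hy) hdxy
  obtain ⟨c, hcM, huc⟩ := id hsu
  have hcy : DividesL c y := by
    obtain ⟨q, hq, hqe⟩ := husy
    refine ⟨q, hq, mul_left_cancel (a := s) ?_⟩
    rw [hqe, huc, mul_assoc]
  have husΔ : DividesL u (s * braidDelta n) :=
    hleast _ (dividesL_mul_right delta_mem) (dvdL_trans hdΔ (delta_dvd_mul_delta hs))
  have hcΔ : DividesL c (braidDelta n) := by
    obtain ⟨q, hq, hqe⟩ := husΔ
    refine ⟨q, hq, mul_left_cancel (a := s) ?_⟩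
    rw [hqe, huc, mul_assoc]
  have hct : DividesL c t := htleast c hcM hcy hcΔ
  have hdst : DividesL d (s*t) := by
    refine dvdL_trans hdu ?_
    rw [huc]
    exact dvdL_mul_left_ap hct s
  exact hsleast d hdM hdst hdΔ

theorem gnormal_start {g x y t : BraidGroup n} (hgcd : IsLeftGcd g x (braidDelta n))
    (hxy : x = g * y) (hty : IsLeftGcd t y (braidDelta n)) :
    IsLeftGcd g (g*t) (braidDelta n) := by
  refine ⟨hgcd.1, dividesL_mul_right hty.1, hgcd.2.2.1, ?_⟩
  intro d hdM hdgt hdΔ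
  refine hgcd.2.2.2 d hdM ?_ hdΔ
  refine dvdL_trans hdgt ?_
  rw [hxy]
  exact dvdL_mul_left_ap hty.2.1 g

theorem simple_gcd_self {s : BraidGroup n} (hs : Simple s) :
    IsLeftGcd s s (braidDelta n) := ⟨hs.1, dvdL_refl s, hs.2, fun _ _ hds _ => hds⟩

/-! ### the head of a normal list is the gcd with Δ -/

theorem head_gcd : ∀ (l : List (BraidGroup n)), (∀ s ∈ l, Simple s) → List.Chain' GNormal l →
    l.prod ∈ PosBraid n ∧ (∀ h : l ≠ [], IsLeftGcd (l.head h) l.prod (braidDelta n)) := by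
  intro l
  induction l with
  | nil => exact fun _ _ => ⟨one_mem _, fun h => absurd rfl h⟩
  | cons s l ih =>
      intro hsimp hchain
      have hs : Simple s := hsimp s (by simp)
      have ih' := ih (fun x hx => hsimp x (by simp [hx])) hchain.tail
      refine ⟨by rw [List.prod_cons]; exact mul_mem hs.1 ih'.1, ?_⟩
      intro h
      rw [List.head_cons, List.prod_cons]
      match l, ih', hchain with
      | [], _, _ => simpa using simple_gcd_self hs
      | (t::r), ih', hchain =>
          have hGN : GNormal s t := (List.isChain_cons_cons.mp hchain).1
          have hhead := ih'.2 (by simp)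
          rw [List.head_cons] at hhead
          exact gnormal_extend hs.1 ih'.1 hGN hhead

/-! ### existence of the normal form -/

theorem exists_normal : ∀ (N : ℕ) (x : BraidGroup n), x ∈ PosBraid n → x ≠ 1 →
    (len x).toNat ≤ N →
    ∃ l : List (BraidGroup n), l ≠ [] ∧ (∀ s ∈ l, Simple s) ∧ List.Chain' GNormal l ∧
      (∀ h : l ≠ [], l.getLast h ≠ 1) ∧ l.prod = x := by
  intro N
  induction N with
  | zero =>
      intro x hx hx1 hN
      have := len_pos hx hx1
      omega
  | succ N ih =>
      intro x hx hx1 hN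
      obtain ⟨g, hg⟩ := gcd_exists hx (delta_mem (n := n))
      obtain ⟨hgM, hgx, hgΔ, hgleast⟩ := id hg
      obtain ⟨i, y₀, hy₀, hxeq⟩ := head_of_ne_one hx hx1
      have hgig : DividesL (braidGen i) g :=
        hgleast _ (Submonoid.subset_closure ⟨i, rfl⟩) ⟨y₀, hy₀, hxeq⟩ (gen_dvd_delta i)
      have hg1 : g ≠ 1 := by
        rintro rfl
        obtain ⟨q, hq, h1q⟩ := hgig
        have h2 := len_nonneg hq
        have h3 : len (1 : BraidGroup n) = 1 + len q := by rw [h1q, len_mul, len_gen]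
        rw [len_one] at h3
        omega
      obtain ⟨y, hyM, hxy⟩ := id hgx
      by_cases hy1 : y = 1
      · subst hy1
        refine ⟨[g], by simp, ?_, List.isChain_singleton g, ?_, by simp [hxy]⟩
        · intro s hs
          simp at hs
          subst hs
          exact ⟨hgM, hgΔ⟩
        · intro h
          simpa using hg1
      · have hlg := len_pos hgM hg1
        have hlx : len x = len g + len y := by rw [hxy, len_mul]
        have hly := len_nonneg hyM
        have hlen_y : (len y).toNat ≤ N := by omega
        obtain ⟨l', hl'ne, hl'simp, hl'chain, hl'last, hl'prod⟩ := ih y hyM hy1 hlen_y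
        have hhead := (head_gcd l' hl'simp hl'chain).2 hl'ne
        rw [hl'prod] at hhead
        refine ⟨g :: l', by simp, ?_, ?_, ?_, ?_⟩
        · intro s hs
          rcases List.mem_cons.mp hs with rfl | hs
          · exact ⟨hgM, hgΔ⟩
          · exact hl'simp s hs
        · refine List.isChain_cons.mpr ?_
          refine ⟨?_, hl'chain⟩
          intro t ht
          rw [List.head?_eq_head hl'ne] at ht
          simp only [Option.mem_some_iff] at ht
          subst ht
          exact gnormal_start hg hxy hhead
        · intro h
          rw [List.getLast_cons hl'ne]
          exact hl'last hl'ne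
        · rw [List.prod_cons, hl'prod, ← hxy]

/-! ### products of nontrivial positive lists are nontrivial -/

theorem prod_ne_one {l : List (BraidGroup n)} (hmem : ∀ s ∈ l, s ∈ PosBraid n)
    (hne : l ≠ []) (hlast : l.getLast hne ≠ 1) : l.prod ≠ 1 := by
  intro hcon
  have hdecomp : l = l.dropLast ++ [l.getLast hne] := (List.dropLast_append_getLast hne).symm
  have hdlM : l.dropLast.prod ∈ PosBraid n :=
    list_prod_mem (fun x hx => hmem x (List.dropLast_subset l hx))
  have hlM : l.getLast hne ∈ PosBraid n := hmem _ (List.getLast_mem hne)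
  have hlen : len l.prod = len l.dropLast.prod + len (l.getLast hne) := by
    conv_lhs => rw [hdecomp]
    rw [List.prod_append, List.prod_singleton, len_mul]
  rw [hcon, len_one] at hlen
  have h1 := len_nonneg hdlM
  have h2 := len_pos hlM hlast
  omega

/-! ### uniqueness -/

theorem normal_unique : ∀ (l₁ l₂ : List (BraidGroup n)),
    (∀ s ∈ l₁, Simple s) → List.Chain' GNormal l₁ → (∀ h : l₁ ≠ [], l₁.getLast h ≠ 1) →
    (∀ s ∈ l₂, Simple s) → List.Chain' GNormal l₂ → (∀ h : l₂ ≠ [], l₂.getLast h ≠ 1) →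
    l₁.prod = l₂.prod → l₁ = l₂ := by
  intro l₁
  induction l₁ with
  | nil =>
      intro l₂ _ _ _ hs₂ _ hl₂ hprod
      match l₂, hl₂, hprod with
      | [], _, _ => rfl
      | (s::t), hl₂, hprod =>
          exact absurd hprod.symm
            (prod_ne_one (fun x hx => (hs₂ x hx).1) (by simp) (hl₂ (by simp)))
  | cons s t ih =>
      intro l₂ hs₁ hc₁ hl₁ hs₂ hc₂ hl₂ hprod
      match l₂, hs₂, hc₂, hl₂, hprod with
      | [], hs₂, hc₂, hl₂, hprod =>
          exact absurd hprod
            (prod_ne_one (fun x hx => (hs₁ x hx).1) (by simp) (hl₁ (by simp)))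
      | (s'::t'), hs₂, hc₂, hl₂, hprod =>
          have hg₁ := (head_gcd (s::t) hs₁ hc₁).2 (by simp)
          have hg₂ := (head_gcd (s'::t') hs₂ hc₂).2 (by simp)
          rw [List.head_cons] at hg₁ hg₂
          rw [hprod] at hg₁
          have hss : s = s' := gcd_unique hg₁ hg₂
          subst hss
          have hprod' : t.prod = t'.prod := by
            rw [List.prod_cons, List.prod_cons] at hprod
            exact mul_left_cancel hprod
          have htail : t = t' := by
            refine ih t' (fun x hx => hs₁ x (by simp [hx])) hc₁.tail ?_
              (fun x hx => hs₂ x (by simp [hx])) hc₂.tail ?_ hprod'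
            · intro h
              rw [← List.getLast_cons (l := t) h]
              exact hl₁ (by simp)
            · intro h
              rw [← List.getLast_cons (l := t') h]
              exact hl₂ (by simp)
          rw [htail]

end Braid
/-- Every positive braid `x ≠ 1` admits a unique normal decomposition
`x = s_1 ⋯ s_p` into simple braids with `s_p ≠ 1`; moreover the first factor is
`gcd_L(x, Δ_n)`. -/
theorem positive_braid_normal_form (n : ℕ) (x : BraidGroup n)
    (hx : x ∈ PosBraid n) (hx1 : x ≠ 1) :
    (∃! l : List (BraidGroup n),
      (∀ s ∈ l, Simple s) ∧ List.Chain' GNormal l ∧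
      (∀ h : l ≠ [], l.getLast h ≠ 1) ∧ l.prod = x) ∧
    ∀ l : List (BraidGroup n),
      ((∀ s ∈ l, Simple s) ∧ List.Chain' GNormal l ∧
        (∀ h : l ≠ [], l.getLast h ≠ 1) ∧ l.prod = x) →
      ∀ h : l ≠ [], IsLeftGcd (l.head h) x (braidDelta n) := by
  constructor
  · obtain ⟨l, hne, hsimp, hchain, hlast, hprod⟩ :=
      Braid.exists_normal (Braid.len x).toNat x hx hx1 (le_refl _)
    refine ⟨l, ⟨hsimp, hchain, hlast, hprod⟩, ?_⟩
    rintro l' ⟨h1, h2, h3, h4⟩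
    exact Braid.normal_unique l' l h1 h2 h3 hsimp hchain hlast (h4.trans hprod.symm)
  · rintro l ⟨h1, h2, h3, h4⟩ h
    have hg := (Braid.head_gcd l h1 h2).2 h
    rw [h4] at hg
    exact hg
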